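/- Let ℬ be a finite set of n×n self-adjoint complex matrices and let P be a unitary matrix such that conjugation by P brings every element of the matrix *-algebra 𝒯 generated by ℬ into a common block-diagonal form that is the finest possible for 𝒯 (i.e., each diagonal block acts irreducibly). Then this block-diagonal form is also the finest common block-diagonal form for the generating set ℬ itself: no invertible matrix can simultaneously bring all elements of ℬ into a strictly finer common block structure. -/
import Mathlib

/-- Abstract counting lemma: in a modular lattice with bottom, given a family `E` of
"Inv-atoms" and a strictly increasing chain of `Inv` elements whose top is below
`c 0 ⊔ sup of E over J`, the chain length is at most `J.card`. -/
lemma chain_le_atoms {α : Type*} [Lattice α] [OrderBot α] [IsModularLattice α]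
    (Inv : α → Prop)
    (hsup : ∀ U W, Inv U → Inv W → Inv (U ⊔ W))
    (hinf : ∀ U W, Inv U → Inv W → Inv (U ⊓ W))
    {ι : Type*} [DecidableEq ι] (E : ι → α) (hE : ∀ j, Inv (E j))
    (hatom : ∀ j U, Inv U → U ≤ E j → U = ⊥ ∨ U = E j) :
    ∀ (k : ℕ) (J : Finset ι) (c : Fin (k + 1) → α),
      (∀ i, Inv (c i)) → StrictMono c → c (Fin.last k) ≤ c 0 ⊔ J.sup E → k ≤ J.card := by
  intro k
  induction k with
  | zero => intro J c _ _ _; exact Nat.zero_le _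
  | succ k ih =>
    intro J c hcInv hc hle
    -- second-to-last element of the chain
    set ck : α := c ((Fin.last k).castSucc) with hck
    -- find j ∈ J with ¬ E j ≤ ck
    have hex : ∃ j ∈ J, ¬ E j ≤ ck := by
      by_contra h
      push_neg at h
      have h1 : J.sup E ≤ ck := Finset.sup_le h
      have h2 : c 0 ≤ ck := hc.monotone (Fin.zero_le _)
      have h3 : c (Fin.last (k + 1)) ≤ ck := le_trans hle (sup_le h2 h1)
      have h4 : ck < c (Fin.last (k + 1)) := hc (Fin.castSucc_lt_last _)
      exact absurd h3 (not_le_of_gt h4)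
    obtain ⟨j, hjJ, hjle⟩ := hex
    -- E j ⊓ ck = ⊥
    have hdisj : E j ⊓ ck = ⊥ := by
      rcases hatom j (E j ⊓ ck) (hinf _ _ (hE j) (hcInv _)) inf_le_left with h | h
      · exact h
      · exact absurd (inf_eq_left.mp h) hjle
    -- the new chain
    set d : Fin (k + 1) → α := fun i => c i.castSucc ⊔ E j with hd
    have hdInv : ∀ i, Inv (d i) := fun i => hsup _ _ (hcInv _) (hE j)
    have hdmono : StrictMono d := by
      intro i1 i2 h12
      have hle' : d i1 ≤ d i2 :=
        sup_le_sup_right (hc.monotone (le_of_lt (by exact_mod_cast h12))) _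
      refine lt_of_le_of_ne hle' ?_
      intro heq
      have hc12 : c i1.castSucc ≤ c i2.castSucc := hc.monotone (le_of_lt (by exact_mod_cast h12))
      have hmod : (c i1.castSucc ⊔ E j) ⊓ c i2.castSucc = c i1.castSucc ⊔ E j ⊓ c i2.castSucc :=
        sup_inf_assoc_of_le _ hc12
      have h2k : c i2.castSucc ≤ ck := hc.monotone (by
        simpa using (Fin.castSucc_le_castSucc_iff.mpr (Fin.le_last i2)))
      have hbot : E j ⊓ c i2.castSucc = ⊥ :=
        le_bot_iff.mp (le_trans (inf_le_inf_left _ h2k) (le_of_eq hdisj))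
      have heq' : c i1.castSucc ⊔ E j = c i2.castSucc ⊔ E j := heq
      have e1 : (c i2.castSucc ⊔ E j) ⊓ c i2.castSucc = c i2.castSucc :=
        inf_eq_right.mpr le_sup_left
      rw [← heq', hmod, hbot, sup_bot_eq] at e1
      exact absurd e1 (ne_of_lt (hc (Fin.castSucc_lt_castSucc_iff.mpr h12)))
    have hdle : d (Fin.last k) ≤ d 0 ⊔ (J.erase j).sup E := by
      have h1 : c (Fin.last k).castSucc ≤ c (Fin.last (k + 1)) :=
        hc.monotone (le_of_lt (Fin.castSucc_lt_last _))
      have h2 : c (Fin.last (k + 1)) ≤ c 0 ⊔ J.sup E := hle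
      have h3 : c 0 ⊔ J.sup E ≤ d 0 ⊔ (J.erase j).sup E := by
        refine sup_le (le_trans le_sup_left le_sup_left) (Finset.sup_le fun j' hj' => ?_)
        by_cases hjj : j' = j
        · subst hjj; exact le_trans le_sup_right le_sup_left
        · exact le_trans (Finset.le_sup (Finset.mem_erase.mpr ⟨hjj, hj'⟩)) le_sup_right
      refine sup_le (le_trans h1 (le_trans h2 h3))
        (le_trans (le_sup_right : E j ≤ c 0 ⊔ E j) le_sup_left)
    have : k ≤ (J.erase j).card := ih (J.erase j) d hdInv hdmono hdle
    have hcard : (J.erase j).card + 1 = J.card := Finset.card_erase_add_one hjJ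
    omega



/-- Proposition 2.1: if a unitary `P` brings the matrix *-algebra generated by a
finite set of self-adjoint matrices `ℬ` into its finest common block-diagonal
form (each block acting irreducibly), then that block structure is also the
finest one for the generating set `ℬ` itself: no invertible matrix can bring all
elements of `ℬ` into a common block structure with more blocks. -/
theorem finest_sbd_of_generators (n K ℓ : ℕ)
    (B : Fin K → Matrix (Fin n) (Fin n) ℂ)
    (hsa : ∀ k, star (B k) = B k)
    (P : Matrix (Fin n) (Fin n) ℂ)
    (hPunit : star P * P = 1 ∧ P * star P = 1)
    (s : Fin ℓ → Set (Fin n))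
    (hdisj : ∀ j j', j ≠ j' → Disjoint (s j) (s j'))
    (hcover : (⋃ j, s j) = Set.univ)
    (hne : ∀ j, (s j).Nonempty)
    -- conjugation by `P` block-diagonalizes every element of the generated *-algebra
    (hblock : ∀ M : Matrix (Fin n) (Fin n) ℂ,
      (∀ S : Set (Matrix (Fin n) (Fin n) ℂ),
        (∀ k, B k ∈ S) → (1 : Matrix (Fin n) (Fin n) ℂ) ∈ S →
        (∀ X ∈ S, ∀ Y ∈ S, ∀ α β : ℂ, α • X + β • Y ∈ S) →
        (∀ X ∈ S, ∀ Y ∈ S, X * Y ∈ S) →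
        (∀ X ∈ S, star X ∈ S) → M ∈ S) →
      ∀ j, ∀ v ∈ Submodule.span ℂ
          ((fun i => (Pi.single i 1 : Fin n → ℂ)) '' s j),
        (star P * M * P).mulVec v ∈ Submodule.span ℂ
          ((fun i => (Pi.single i 1 : Fin n → ℂ)) '' s j))
    -- the block structure is the finest for the generated *-algebra:
    -- each block acts irreducibly on the corresponding coordinate subspace
    (hirr : ∀ j, ∀ U : Submodule ℂ (Fin n → ℂ),
      U ≤ Submodule.span ℂ ((fun i => (Pi.single i 1 : Fin n → ℂ)) '' s j) →
      (∀ M : Matrix (Fin n) (Fin n) ℂ,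
        (∀ S : Set (Matrix (Fin n) (Fin n) ℂ),
          (∀ k, B k ∈ S) → (1 : Matrix (Fin n) (Fin n) ℂ) ∈ S →
          (∀ X ∈ S, ∀ Y ∈ S, ∀ α β : ℂ, α • X + β • Y ∈ S) →
          (∀ X ∈ S, ∀ Y ∈ S, X * Y ∈ S) →
          (∀ X ∈ S, star X ∈ S) → M ∈ S) →
        ∀ v ∈ U, (star P * M * P).mulVec v ∈ U) →
      U = ⊥ ∨ U = Submodule.span ℂ ((fun i => (Pi.single i 1 : Fin n → ℂ)) '' s j)) :
    -- conclusion: no invertible matrix brings ℬ into a common block structure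
    -- with strictly more blocks
    ∀ (T : Matrix (Fin n) (Fin n) ℂ), IsUnit T →
      ∀ (ℓ' : ℕ) (q : Fin ℓ' → Set (Fin n)),
        (∀ j j', j ≠ j' → Disjoint (q j) (q j')) →
        (⋃ j, q j) = Set.univ →
        (∀ j, (q j).Nonempty) →
        (∀ k, ∀ j, ∀ v ∈ Submodule.span ℂ
            ((fun i => (Pi.single i 1 : Fin n → ℂ)) '' q j),
          (T⁻¹ * B k * T).mulVec v ∈ Submodule.span ℂ
            ((fun i => (Pi.single i 1 : Fin n → ℂ)) '' q j)) →
        ℓ' ≤ ℓ := by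
  intro T hT ℓ' q hqdisj hqcover hqne hq
  classical
  set e : Fin n → (Fin n → ℂ) := fun i => (Pi.single i 1 : Fin n → ℂ) with he
  set E : Fin ℓ → Submodule ℂ (Fin n → ℂ) := fun j => Submodule.span ℂ (e '' s j) with hE
  set F : Fin ℓ' → Submodule ℂ (Fin n → ℂ) := fun j => Submodule.span ℂ (e '' q j) with hF
  -- the predicate "M belongs to the generated *-algebra"
  set Pred : Matrix (Fin n) (Fin n) ℂ → Prop := fun M =>
    (∀ S : Set (Matrix (Fin n) (Fin n) ℂ),
        (∀ k, B k ∈ S) → (1 : Matrix (Fin n) (Fin n) ℂ) ∈ S →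
        (∀ X ∈ S, ∀ Y ∈ S, ∀ α β : ℂ, α • X + β • Y ∈ S) →
        (∀ X ∈ S, ∀ Y ∈ S, X * Y ∈ S) →
        (∀ X ∈ S, star X ∈ S) → M ∈ S) with hPred
  set Inv : Submodule ℂ (Fin n → ℂ) → Prop := fun U =>
    ∀ M, Pred M → ∀ v ∈ U, (star P * M * P).mulVec v ∈ U with hInv
  have hTdet : IsUnit T.det := (Matrix.isUnit_iff_isUnit_det T).mp hT
  have hTinv1 : T * T⁻¹ = 1 := Matrix.mul_nonsing_inv T hTdet
  have hTinv2 : T⁻¹ * T = 1 := Matrix.nonsing_inv_mul T hTdet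
  -- "good" matrices: those T-conjugation-preserving every F j
  set good : Matrix (Fin n) (Fin n) ℂ → Prop := fun M =>
    ∀ j, ∀ v ∈ F j, (T⁻¹ * M * T).mulVec v ∈ F j with hgood
  have good_lin : ∀ X Y, good X → good Y → ∀ α β : ℂ, good (α • X + β • Y) := by
    intro X Y hX hY α β j v hv
    have hM : T⁻¹ * (α • X + β • Y) * T = α • (T⁻¹ * X * T) + β • (T⁻¹ * Y * T) := by
      rw [Matrix.mul_add, Matrix.add_mul, Matrix.mul_smul, Matrix.smul_mul,
        Matrix.mul_smul, Matrix.smul_mul]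
    rw [hM, Matrix.add_mulVec, Matrix.smul_mulVec, Matrix.smul_mulVec]
    exact Submodule.add_mem _ (Submodule.smul_mem _ _ (hX j v hv))
      (Submodule.smul_mem _ _ (hY j v hv))
  have good_mul : ∀ X Y, good X → good Y → good (X * Y) := by
    intro X Y hX hY j v hv
    have hM : T⁻¹ * (X * Y) * T = (T⁻¹ * X * T) * (T⁻¹ * Y * T) := by
      simp only [Matrix.mul_assoc]
      rw [← Matrix.mul_assoc T T⁻¹ (Y * T), hTinv1, Matrix.one_mul]
    rw [hM, ← Matrix.mulVec_mulVec]
    exact hX j _ (hY j v hv)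
  have good_one : good 1 := by
    intro j v hv
    have : T⁻¹ * 1 * T = 1 := by rw [Matrix.mul_one, hTinv2]
    rwa [this, Matrix.one_mulVec]
  have pred_good : ∀ M, Pred M → good M := by
    intro M hM
    have key := hM {X | good X ∧ good (star X)}
      (fun k => ⟨fun j v hv => hq k j v hv, by rw [hsa k]; exact fun j v hv => hq k j v hv⟩)
      ⟨good_one, by rw [star_one]; exact good_one⟩
      (fun X hX Y hY α β => ⟨good_lin X Y hX.1 hY.1 α β, by
        rw [star_add, star_smul, star_smul]
        exact good_lin _ _ hX.2 hY.2 _ _⟩)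
      (fun X hX Y hY => ⟨good_mul X Y hX.1 hY.1, by
        rw [star_mul]
        exact good_mul _ _ hY.2 hX.2⟩)
      (fun X hX => ⟨hX.2, by rw [star_star]; exact hX.1⟩)
    exact key.1
  -- basic closure properties of Inv
  have Inv_bot : Inv ⊥ := by
    intro M _ v hv
    rw [Submodule.mem_bot] at hv
    rw [hv, Matrix.mulVec_zero]
    exact Submodule.zero_mem _
  have Inv_sup : ∀ U W, Inv U → Inv W → Inv (U ⊔ W) := by
    intro U W hU hW M hM v hv
    obtain ⟨u, hu, w, hw, rfl⟩ := Submodule.mem_sup.mp hv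
    rw [Matrix.mulVec_add]
    exact Submodule.add_mem _ (Submodule.mem_sup_left (hU M hM u hu))
      (Submodule.mem_sup_right (hW M hM w hw))
  have Inv_inf : ∀ U W, Inv U → Inv W → Inv (U ⊓ W) := by
    intro U W hU hW M hM v hv
    exact ⟨hU M hM v hv.1, hW M hM v hv.2⟩
  have Inv_E : ∀ j, Inv (E j) := fun j M hM v hv => hblock M hM j v hv
  have atom_E : ∀ j (U : Submodule ℂ (Fin n → ℂ)), Inv U → U ≤ E j → U = ⊥ ∨ U = E j :=
    fun j U hU hle => hirr j U hle (fun M hM v hv => hU M hM v hv)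
  -- the conjugating matrix A = star P * T and its inverse
  set A : Matrix (Fin n) (Fin n) ℂ := star P * T with hA
  set A' : Matrix (Fin n) (Fin n) ℂ := T⁻¹ * P with hA'
  have hAA' : A * A' = 1 := by
    rw [hA, hA', Matrix.mul_assoc, ← Matrix.mul_assoc T T⁻¹ P, hTinv1, Matrix.one_mul,
      hPunit.1]
  have hA'A : A' * A = 1 := by
    rw [hA, hA', Matrix.mul_assoc, ← Matrix.mul_assoc P (star P) T, hPunit.2, Matrix.one_mul,
      hTinv2]
  have hAinj : Function.Injective (A.mulVec) := by
    intro x y hxy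
    have := congrArg (A'.mulVec) hxy
    rwa [Matrix.mulVec_mulVec, Matrix.mulVec_mulVec, hA'A, Matrix.one_mulVec,
      Matrix.one_mulVec] at this
  set G : Fin ℓ' → Submodule ℂ (Fin n → ℂ) :=
    fun j => Submodule.map (Matrix.mulVecLin A) (F j) with hG
  have Inv_G : ∀ j, Inv (G j) := by
    intro j M hM v hv
    obtain ⟨w, hw, rfl⟩ := hv
    have key : (star P * M * P) * A = A * (T⁻¹ * M * T) := by
      rw [hA]
      simp only [Matrix.mul_assoc]
      rw [← Matrix.mul_assoc P (star P) T, hPunit.2, Matrix.one_mul,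
        ← Matrix.mul_assoc T T⁻¹ (M * T), hTinv1, Matrix.one_mul]
    rw [Matrix.mulVecLin_apply, Matrix.mulVec_mulVec, key, ← Matrix.mulVec_mulVec]
    exact Submodule.mem_map_of_mem (pred_good M hM j w hw)
  -- the chain of partial sups of the G's
  set c : Fin (ℓ' + 1) → Submodule ℂ (Fin n → ℂ) :=
    fun i => (Finset.univ.filter (fun j : Fin ℓ' => (j : ℕ) < (i : ℕ))).sup G with hc
  have Inv_c : ∀ i, Inv (c i) := by
    intro i
    exact Finset.sup_induction Inv_bot (fun a ha b hb => Inv_sup a b ha hb)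
      (fun j _ => Inv_G j)
  have c_mono : ∀ i1 i2 : Fin (ℓ' + 1), i1 ≤ i2 → c i1 ≤ c i2 := by
    intro i1 i2 h
    apply Finset.sup_mono
    intro x hx
    simp only [Finset.mem_filter, Finset.mem_univ, true_and] at hx ⊢
    omega
  have c_strict : StrictMono c := by
    intro i1 i2 h12
    have hlt : (i1 : ℕ) < (i2 : ℕ) := h12
    have hi1 : (i1 : ℕ) < ℓ' := lt_of_lt_of_le hlt (Nat.lt_succ_iff.mp i2.isLt)
    set j' : Fin ℓ' := ⟨(i1 : ℕ), hi1⟩ with hj'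
    obtain ⟨m, hm⟩ := hqne j'
    have hxG : A.mulVec (e m) ∈ G j' :=
      ⟨e m, Submodule.subset_span ⟨m, hm, rfl⟩, rfl⟩
    have hGc : G j' ≤ c i2 := by
      apply Finset.le_sup
      simp only [Finset.mem_filter, Finset.mem_univ, true_and]
      exact hlt
    have hxc2 : A.mulVec (e m) ∈ c i2 := hGc hxG
    have hxc1 : A.mulVec (e m) ∉ c i1 := by
      intro hmem
      set U0 : Submodule ℂ (Fin n → ℂ) := LinearMap.ker (LinearMap.proj m :
        (Fin n → ℂ) →ₗ[ℂ] ℂ) with hU0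
      have hle : c i1 ≤ Submodule.map (Matrix.mulVecLin A) U0 := by
        apply Finset.sup_le
        intro j'' hj''
        simp only [Finset.mem_filter, Finset.mem_univ, true_and] at hj''
        have hne' : j'' ≠ j' := by
          intro hjj
          rw [hjj] at hj''
          exact absurd hj'' (lt_irrefl _)
        apply Submodule.map_mono
        rw [hF]
        apply Submodule.span_le.mpr
        rintro _ ⟨i, hi, rfl⟩
        have hine : i ≠ m := by
          intro him
          exact Set.disjoint_left.mp (hqdisj j'' j' hne') hi (him ▸ hm)
        simp only [hU0, LinearMap.mem_ker, LinearMap.proj_apply, he]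
        exact Pi.single_eq_of_ne (Ne.symm hine) 1
      obtain ⟨u, hu, hux⟩ := hle hmem
      have : u = e m := hAinj hux
      rw [this] at hu
      have hu0 : (e m) m = 0 := hu
      simp [he] at hu0
    refine lt_of_le_of_ne (c_mono i1 i2 (le_of_lt h12)) ?_
    intro heq
    rw [← heq] at hxc2
    exact hxc1 hxc2
  -- the E's cover everything
  have hsupE : (Finset.univ : Finset (Fin ℓ)).sup E = ⊤ := by
    rw [eq_top_iff]
    intro v _
    have hv : v = ∑ i, v i • e i := by
      have h1 : ∀ (i : Fin n) (a : ℂ), Pi.single i a = a • (e i) := by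
        intro i a
        ext i'
        rcases eq_or_ne i i' with rfl | hii
        · simp [he]
        · simp [he, Pi.single_eq_of_ne (Ne.symm hii), Pi.single_eq_of_ne (Ne.symm hii)]
      conv_lhs => rw [← Finset.univ_sum_single v]
      exact Finset.sum_congr rfl fun i _ => h1 i (v i)
    rw [hv]
    apply Submodule.sum_mem
    intro i _
    apply Submodule.smul_mem
    have : i ∈ ⋃ j, s j := by rw [hcover]; trivial
    obtain ⟨j, hj⟩ := Set.mem_iUnion.mp this
    have hEj : E j ≤ Finset.univ.sup E := Finset.le_sup (Finset.mem_univ j)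
    exact hEj (Submodule.subset_span ⟨i, hj, rfl⟩)
  have hfinal : c (Fin.last ℓ') ≤ c 0 ⊔ (Finset.univ : Finset (Fin ℓ)).sup E := by
    rw [hsupE]
    exact le_trans le_top le_sup_right
  have := chain_le_atoms Inv Inv_sup Inv_inf E Inv_E atom_E ℓ' Finset.univ c Inv_c
    c_strict hfinal
  simpa using this
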